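/- The reduced Hamiltonian H(r₁,r₂,θ) = -(1/2)[Ω₀ln(1-r₁²) + Ω₀ln(1-r₂²) + (Φ/2)ln(r₁² + r₂² - 2r₁r₂cos θ)] has a critical point at (r₀, r₀, π) with r₀ = √(Φ/(4Ω₀+Φ)), and its Hessian matrix there is (1/8)·[[7Φ+12Ω₀+Φ²/Ω₀, Φ+4Ω₀, 0],[Φ+4Ω₀, 7Φ+12Ω₀+Φ²/Ω₀, 0],[0,0,Φ]]. -/

import Mathlib

/-- The reduced Hamiltonian
`H(r₁,r₂,θ) = -(1/2)[Ω₀ln(1-r₁²) + Ω₀ln(1-r₂²) + (Φ/2)ln(r₁²+r₂²-2r₁r₂cos θ)]`. -/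
noncomputable def Hred (Ω₀ Φ r₁ r₂ θ : ℝ) : ℝ :=
  -(1 / 2) * (Ω₀ * Real.log (1 - r₁ ^ 2) + Ω₀ * Real.log (1 - r₂ ^ 2)
    + (Φ / 2) * Real.log (r₁ ^ 2 + r₂ ^ 2 - 2 * r₁ * r₂ * Real.cos θ))

lemma hasDerivAt_Hred_x (Ω₀ Φ b θ x : ℝ) (h1 : 1 - x ^ 2 ≠ 0)
    (h2 : x ^ 2 + b ^ 2 - 2 * x * b * Real.cos θ ≠ 0) :
    HasDerivAt (fun x' => Hred Ω₀ Φ x' b θ)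
      (-(1 / 2) * (Ω₀ * ((0 - 2 * x) / (1 - x ^ 2))
        + Φ / 2 * ((2 * x - 2 * b * Real.cos θ) / (x ^ 2 + b ^ 2 - 2 * x * b * Real.cos θ)))) x := by
  have hx2 : HasDerivAt (fun x : ℝ => x ^ 2) (2 * x) x := by simpa using hasDerivAt_pow 2 x
  have hA : HasDerivAt (fun x : ℝ => 1 - x ^ 2) (0 - 2 * x) x := (hasDerivAt_const x 1).sub hx2
  have hlin : HasDerivAt (fun x : ℝ => 2 * x * b * Real.cos θ) (2 * b * Real.cos θ) x := by
    have h := (((hasDerivAt_id x).const_mul 2).mul_const b).mul_const (Real.cos θ)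
    simpa [mul_assoc, mul_comm, mul_left_comm] using h
  have hD : HasDerivAt (fun x : ℝ => x ^ 2 + b ^ 2 - 2 * x * b * Real.cos θ)
      (2 * x - 2 * b * Real.cos θ) x := by
    exact (hx2.add_const (b ^ 2)).sub hlin
  have h := ((((hA.log h1).const_mul Ω₀).add_const (Ω₀ * Real.log (1 - b ^ 2))).add
      ((hD.log h2).const_mul (Φ / 2))).const_mul (-(1 / 2))
  simp only [Hred]
  exact h

lemma hasDerivAt_Hred_y (Ω₀ Φ a θ y : ℝ) (h1 : 1 - y ^ 2 ≠ 0)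
    (h2 : a ^ 2 + y ^ 2 - 2 * a * y * Real.cos θ ≠ 0) :
    HasDerivAt (fun y' => Hred Ω₀ Φ a y' θ)
      (-(1 / 2) * (Ω₀ * ((0 - 2 * y) / (1 - y ^ 2))
        + Φ / 2 * ((2 * y - 2 * a * Real.cos θ) / (a ^ 2 + y ^ 2 - 2 * a * y * Real.cos θ)))) y := by
  have hy2 : HasDerivAt (fun y : ℝ => y ^ 2) (2 * y) y := by simpa using hasDerivAt_pow 2 y
  have hA : HasDerivAt (fun y : ℝ => 1 - y ^ 2) (0 - 2 * y) y := (hasDerivAt_const y 1).sub hy2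
  have hlin : HasDerivAt (fun y : ℝ => 2 * a * y * Real.cos θ) (2 * a * Real.cos θ) y := by
    have h := (((hasDerivAt_id y).const_mul (2 * a))).mul_const (Real.cos θ)
    simpa [mul_assoc, mul_comm, mul_left_comm] using h
  have hD : HasDerivAt (fun y : ℝ => a ^ 2 + y ^ 2 - 2 * a * y * Real.cos θ)
      (2 * y - 2 * a * Real.cos θ) y := by
    exact ((hy2.const_add (a ^ 2)).sub hlin)
  have h := (((hA.log h1).const_mul Ω₀).const_add (Ω₀ * Real.log (1 - a ^ 2))).add
      ((hD.log h2).const_mul (Φ / 2))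
  have h' := h.const_mul (-(1 / 2))
  simp only [Hred]
  exact h'

lemma hasDerivAt_Hred_θ (Ω₀ Φ a b θ : ℝ)
    (h2 : a ^ 2 + b ^ 2 - 2 * a * b * Real.cos θ ≠ 0) :
    HasDerivAt (fun θ' => Hred Ω₀ Φ a b θ')
      (-(1 / 2) * (Φ / 2 * ((2 * a * b * Real.sin θ) / (a ^ 2 + b ^ 2 - 2 * a * b * Real.cos θ)))) θ := by
  have hD : HasDerivAt (fun θ' : ℝ => a ^ 2 + b ^ 2 - 2 * a * b * Real.cos θ')
      (2 * a * b * Real.sin θ) θ := by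
    have h := ((Real.hasDerivAt_cos θ).const_mul (2 * a * b)).const_sub (a ^ 2 + b ^ 2)
    exact h.congr_deriv (by ring)
  have h := (((hD.log h2).const_mul (Φ / 2)).const_add
      (Ω₀ * Real.log (1 - a ^ 2) + Ω₀ * Real.log (1 - b ^ 2))).const_mul (-(1 / 2))
  simp only [Hred]
  convert h using 1

set_option maxHeartbeats 1000000 in
/-- `H` has a critical point at `(r₀, r₀, π)` with
`r₀ = √(Φ/(4Ω₀+Φ))`, and its Hessian matrix there is
`(1/8)·[[7Φ+12Ω₀+Φ²/Ω₀, Φ+4Ω₀, 0], [Φ+4Ω₀, 7Φ+12Ω₀+Φ²/Ω₀, 0], [0, 0, Φ]]`. -/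
theorem Hred_critical_point_and_hessian
    (Ω₀ Φ : ℝ) (hΩ₀ : 0 < Ω₀) (hΦ : 0 < Φ)
    (r₀ : ℝ) (hr₀ : r₀ = Real.sqrt (Φ / (4 * Ω₀ + Φ))) :
    -- critical point: the three partial derivatives vanish
    HasDerivAt (fun x => Hred Ω₀ Φ x r₀ Real.pi) 0 r₀ ∧
    HasDerivAt (fun y => Hred Ω₀ Φ r₀ y Real.pi) 0 r₀ ∧
    HasDerivAt (fun θ => Hred Ω₀ Φ r₀ r₀ θ) 0 Real.pi ∧
    -- Hessian entries
    deriv (fun x => deriv (fun x' => Hred Ω₀ Φ x' r₀ Real.pi) x) r₀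
      = (7 * Φ + 12 * Ω₀ + Φ ^ 2 / Ω₀) / 8 ∧
    deriv (fun y => deriv (fun y' => Hred Ω₀ Φ r₀ y' Real.pi) y) r₀
      = (7 * Φ + 12 * Ω₀ + Φ ^ 2 / Ω₀) / 8 ∧
    deriv (fun x => deriv (fun y => Hred Ω₀ Φ x y Real.pi) r₀) r₀
      = (Φ + 4 * Ω₀) / 8 ∧
    deriv (fun x => deriv (fun θ => Hred Ω₀ Φ x r₀ θ) Real.pi) r₀ = 0 ∧
    deriv (fun y => deriv (fun θ => Hred Ω₀ Φ r₀ y θ) Real.pi) r₀ = 0 ∧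
    deriv (fun θ => deriv (fun θ' => Hred Ω₀ Φ r₀ r₀ θ') θ) Real.pi = Φ / 8 := by
  have hs : (0:ℝ) < 4 * Ω₀ + Φ := by linarith
  have hr2 : r₀ ^ 2 = Φ / (4 * Ω₀ + Φ) := by
    rw [hr₀, Real.sq_sqrt]; positivity
  have hrpos : 0 < r₀ := by rw [hr₀]; positivity
  have hrlt : r₀ < 1 := by
    have h2 : r₀ ^ 2 < 1 := by rw [hr2, div_lt_one hs]; linarith
    nlinarith
  have key : r₀ ^ 2 * (4 * Ω₀ + Φ) = Φ := by rw [hr2]; field_simp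
  have h1 : 1 - r₀ ^ 2 ≠ 0 := by nlinarith
  have hD : r₀ ^ 2 + r₀ ^ 2 - 2 * r₀ * r₀ * Real.cos Real.pi ≠ 0 := by
    rw [Real.cos_pi]; nlinarith
  have hr0 : r₀ ≠ 0 := ne_of_gt hrpos
  have hsum : r₀ + r₀ ≠ 0 := by positivity
  have hΩ' : Ω₀ ≠ 0 := ne_of_gt hΩ₀
  have hΦ' : Φ ≠ 0 := ne_of_gt hΦ
  have hs' : (4 * Ω₀ + Φ) ≠ 0 := ne_of_gt hs
  have hIoo : Set.Ioo (0:ℝ) 1 ∈ nhds r₀ := Ioo_mem_nhds hrpos hrlt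
  refine ⟨?_, ?_, ?_, ?_, ?_, ?_, ?_, ?_, ?_⟩
  · have h := hasDerivAt_Hred_x Ω₀ Φ r₀ Real.pi r₀ h1 hD
    convert h using 1
    rw [Real.cos_pi]
    field_simp
    nlinarith [key]
  · have h := hasDerivAt_Hred_y Ω₀ Φ r₀ Real.pi r₀ h1 hD
    convert h using 1
    rw [Real.cos_pi]
    field_simp
    nlinarith [key]
  · have h := hasDerivAt_Hred_θ Ω₀ Φ r₀ r₀ Real.pi hD
    convert h using 1
    rw [Real.sin_pi]
    ring
  · -- xx
    have hev : (fun x => deriv (fun x' => Hred Ω₀ Φ x' r₀ Real.pi) x) =ᶠ[nhds r₀]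
        (fun x => Ω₀ * x / (1 - x ^ 2) - Φ / 2 / (x + r₀)) := by
      filter_upwards [hIoo] with x hx
      have hx1 : 1 - x ^ 2 ≠ 0 := by nlinarith [hx.1, hx.2]
      have hxD : x ^ 2 + r₀ ^ 2 - 2 * x * r₀ * Real.cos Real.pi ≠ 0 := by
        rw [Real.cos_pi]; nlinarith [hx.1]
      rw [(hasDerivAt_Hred_x Ω₀ Φ r₀ Real.pi x hx1 hxD).deriv, Real.cos_pi,
        show x ^ 2 + r₀ ^ 2 - 2 * x * r₀ * (-1:ℝ) = (x + r₀) ^ 2 from by ring]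
      have hsx : x + r₀ ≠ 0 := ne_of_gt (by linarith [hx.1])
      field_simp
      ring
    rw [hev.deriv_eq]
    have hx2 : HasDerivAt (fun x : ℝ => x ^ 2) (2 * r₀) r₀ := by simpa using hasDerivAt_pow 2 r₀
    have hnum : HasDerivAt (fun x : ℝ => Ω₀ * x) (Ω₀ * 1) r₀ := (hasDerivAt_id' r₀).const_mul Ω₀
    have hden : HasDerivAt (fun x : ℝ => 1 - x ^ 2) (0 - 2 * r₀) r₀ := (hasDerivAt_const r₀ 1).sub hx2
    have hq1 := hnum.div hden h1
    have hq2 := (hasDerivAt_const r₀ (Φ / 2)).div ((hasDerivAt_id' r₀).add_const r₀) hsum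
    rw [HasDerivAt.deriv (f := fun x => Ω₀ * x / (1 - x ^ 2) - Φ / 2 / (x + r₀)) (hq1.sub hq2)]
    have step : (Ω₀ * 1 * (1 - r₀ ^ 2) - Ω₀ * r₀ * (0 - 2 * r₀)) / (1 - r₀ ^ 2) ^ 2
        - (0 * (r₀ + r₀) - Φ / 2 * 1) / (r₀ + r₀) ^ 2
        = Ω₀ * (1 + r₀ ^ 2) / (1 - r₀ ^ 2) ^ 2 + Φ / (8 * r₀ ^ 2) := by
      field_simp
      ring
    rw [step, hr2]
    field_simp
    ring
  · -- yy
    have hev : (fun y => deriv (fun y' => Hred Ω₀ Φ r₀ y' Real.pi) y) =ᶠ[nhds r₀]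
        (fun y => Ω₀ * y / (1 - y ^ 2) - Φ / 2 / (r₀ + y)) := by
      filter_upwards [hIoo] with y hy
      have hy1 : 1 - y ^ 2 ≠ 0 := by nlinarith [hy.1, hy.2]
      have hyD : r₀ ^ 2 + y ^ 2 - 2 * r₀ * y * Real.cos Real.pi ≠ 0 := by
        rw [Real.cos_pi]; nlinarith [hy.1]
      rw [(hasDerivAt_Hred_y Ω₀ Φ r₀ Real.pi y hy1 hyD).deriv, Real.cos_pi,
        show r₀ ^ 2 + y ^ 2 - 2 * r₀ * y * (-1:ℝ) = (r₀ + y) ^ 2 from by ring]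
      have hsy : r₀ + y ≠ 0 := ne_of_gt (by linarith [hy.1])
      field_simp
      ring
    rw [hev.deriv_eq]
    have hx2 : HasDerivAt (fun y : ℝ => y ^ 2) (2 * r₀) r₀ := by simpa using hasDerivAt_pow 2 r₀
    have hnum : HasDerivAt (fun y : ℝ => Ω₀ * y) (Ω₀ * 1) r₀ := (hasDerivAt_id' r₀).const_mul Ω₀
    have hden : HasDerivAt (fun y : ℝ => 1 - y ^ 2) (0 - 2 * r₀) r₀ := (hasDerivAt_const r₀ 1).sub hx2
    have hq1 := hnum.div hden h1
    have hq2 := (hasDerivAt_const r₀ (Φ / 2)).div ((hasDerivAt_id' r₀).const_add r₀) hsum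
    rw [HasDerivAt.deriv (f := fun y => Ω₀ * y / (1 - y ^ 2) - Φ / 2 / (r₀ + y)) (hq1.sub hq2)]
    have step : (Ω₀ * 1 * (1 - r₀ ^ 2) - Ω₀ * r₀ * (0 - 2 * r₀)) / (1 - r₀ ^ 2) ^ 2
        - (0 * (r₀ + r₀) - Φ / 2 * 1) / (r₀ + r₀) ^ 2
        = Ω₀ * (1 + r₀ ^ 2) / (1 - r₀ ^ 2) ^ 2 + Φ / (8 * r₀ ^ 2) := by
      field_simp
      ring
    rw [step, hr2]
    field_simp
    ring
  · -- xy
    have hev : (fun x => deriv (fun y => Hred Ω₀ Φ x y Real.pi) r₀) =ᶠ[nhds r₀]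
        (fun x => Ω₀ * r₀ / (1 - r₀ ^ 2) - Φ / 2 / (x + r₀)) := by
      filter_upwards [hIoo] with x hx
      have hxD : x ^ 2 + r₀ ^ 2 - 2 * x * r₀ * Real.cos Real.pi ≠ 0 := by
        rw [Real.cos_pi]; nlinarith [hx.1]
      rw [(hasDerivAt_Hred_y Ω₀ Φ x Real.pi r₀ h1 hxD).deriv, Real.cos_pi,
        show x ^ 2 + r₀ ^ 2 - 2 * x * r₀ * (-1:ℝ) = (x + r₀) ^ 2 from by ring]
      have hsx : x + r₀ ≠ 0 := ne_of_gt (by linarith [hx.1])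
      field_simp
      ring
    rw [hev.deriv_eq]
    have hq2 := (hasDerivAt_const r₀ (Φ / 2)).div ((hasDerivAt_id' r₀).add_const r₀) hsum
    rw [HasDerivAt.deriv (f := fun x => Ω₀ * r₀ / (1 - r₀ ^ 2) - Φ / 2 / (x + r₀))
      ((hasDerivAt_const r₀ (Ω₀ * r₀ / (1 - r₀ ^ 2))).sub hq2)]
    have step : (0:ℝ) - (0 * (r₀ + r₀) - Φ / 2 * 1) / (r₀ + r₀) ^ 2 = Φ / (8 * r₀ ^ 2) := by
      rw [show (r₀ + r₀) ^ 2 = 4 * r₀ ^ 2 from by ring]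
      field_simp
      ring
    rw [step, hr2]
    field_simp
    ring
  · -- xθ
    have hev : (fun x => deriv (fun θ => Hred Ω₀ Φ x r₀ θ) Real.pi) =ᶠ[nhds r₀]
        (fun _ => (0:ℝ)) := by
      filter_upwards [hIoo] with x hx
      have hxD : x ^ 2 + r₀ ^ 2 - 2 * x * r₀ * Real.cos Real.pi ≠ 0 := by
        rw [Real.cos_pi]; nlinarith [hx.1]
      rw [(hasDerivAt_Hred_θ Ω₀ Φ x r₀ Real.pi hxD).deriv, Real.sin_pi]
      ring
    rw [hev.deriv_eq, deriv_const]
  · -- yθ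
    have hev : (fun y => deriv (fun θ => Hred Ω₀ Φ r₀ y θ) Real.pi) =ᶠ[nhds r₀]
        (fun _ => (0:ℝ)) := by
      filter_upwards [hIoo] with y hy
      have hyD : r₀ ^ 2 + y ^ 2 - 2 * r₀ * y * Real.cos Real.pi ≠ 0 := by
        rw [Real.cos_pi]; nlinarith [hy.1]
      rw [(hasDerivAt_Hred_θ Ω₀ Φ r₀ y Real.pi hyD).deriv, Real.sin_pi]
      ring
    rw [hev.deriv_eq, deriv_const]
  · -- θθ
    have hcos : ∀ᶠ θ in nhds Real.pi, Real.cos θ < 1 := by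
      have h1lt : Real.cos Real.pi < 1 := by rw [Real.cos_pi]; norm_num
      exact (Real.continuous_cos.continuousAt (x := Real.pi)).eventually (eventually_lt_nhds h1lt)
    have hev : (fun θ => deriv (fun θ' => Hred Ω₀ Φ r₀ r₀ θ') θ) =ᶠ[nhds Real.pi]
        (fun θ => -(1 / 2) * (Φ / 2 * ((2 * r₀ * r₀ * Real.sin θ)
          / (r₀ ^ 2 + r₀ ^ 2 - 2 * r₀ * r₀ * Real.cos θ)))) := by
      filter_upwards [hcos] with θ hθ
      have hDθ : r₀ ^ 2 + r₀ ^ 2 - 2 * r₀ * r₀ * Real.cos θ ≠ 0 := by nlinarith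
      exact (hasDerivAt_Hred_θ Ω₀ Φ r₀ r₀ θ hDθ).deriv
    rw [hev.deriv_eq]
    have hsin : HasDerivAt (fun θ => 2 * r₀ * r₀ * Real.sin θ) (2 * r₀ * r₀ * Real.cos Real.pi)
        Real.pi := (Real.hasDerivAt_sin Real.pi).const_mul (2 * r₀ * r₀)
    have hden : HasDerivAt (fun θ => r₀ ^ 2 + r₀ ^ 2 - 2 * r₀ * r₀ * Real.cos θ)
        (0 - 2 * r₀ * r₀ * -Real.sin Real.pi) Real.pi := by
      have h := ((Real.hasDerivAt_cos Real.pi).const_mul (2 * r₀ * r₀)).const_sub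
        (r₀ ^ 2 + r₀ ^ 2)
      exact h.congr_deriv (by ring)
    have hq := (hsin.div hden hD).const_mul (Φ / 2)
    rw [HasDerivAt.deriv (f := fun θ => -(1 / 2) * (Φ / 2 * (2 * r₀ * r₀ * Real.sin θ
      / (r₀ ^ 2 + r₀ ^ 2 - 2 * r₀ * r₀ * Real.cos θ)))) (hq.const_mul (-(1 / 2)))]
    rw [Real.cos_pi, Real.sin_pi]
    field_simp
    ring
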